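/- Consider a latent class model whose classes are attribute profiles α ∈ {0,1}^K (K ≥ 1), with class probabilities η_α > 0 summing to 1 and item response probabilities θ_{jrα} > 0 with Σ_{r=0}^{M_j−1} θ_{jrα} = 1 for j = 1,…,J. Write α = (α_1, α′) with α′ ∈ {0,1}^{K−1}, and suppose that only item 1 depends on the first attribute: θ_{jr(1,α′)} = θ_{jr(0,α′)} for every j ≥ 2, every r, and every α′. Then there exists ε > 0 such that for every E with |E − 1| < ε and E ≠ 1, the parameters defined by η̄_{(0,α′)} = η_{(0,α′)} + (1−E)η_{(1,α′)}, η̄_{(1,α′)} = E·η_{(1,α′)}, θ̄_{1r(0,α′)} = θ_{1r(0,α′)}, θ̄_{1r(1,α′)} = (1/E)·θ_{1r(1,α′)} + (1 − 1/E)·θ_{1r(0,α′)}, and θ̄_{jrα} = θ_{jrα} for j ≥ 2, are valid parameters (all strictly positive, η̄ summing to 1 and each θ̄_{j·α} summing to 1), satisfy (η̄, θ̄) ≠ (η, θ), and produce the same response-pattern distribution: Σ_α η̄_α ∏_{j=1}^J θ̄_{j r_j α} = Σ_α η_α ∏_{j=1}^J θ_{j r_j α} for every pattern r. Hence the parameters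 are not identifiable when some attribute is required by only one item. -/

import Mathlib

/-- Proposition 2(i): if only the first item depends on the first
attribute, the parameters of the attribute-profile latent class model are not
identifiable; an explicit alternative parameter set is constructed. Attribute
profiles are `Bool × (Fin K → Bool)` (so there are `K + 1 ≥ 1` attributes, the
first coordinate being the first attribute); the items are `Fin (J + 1)` (item 1
is `0 : Fin (J + 1)`), and item `j` has `M j + 2` response levels. -/
theorem stmt9 {K J : ℕ} (M : Fin (J + 1) → ℕ)
    (η : Bool × (Fin K → Bool) → ℝ)
    (hη : ∀ α, 0 < η α) (hηs : ∑ α, η α = 1)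
    (θ : (j : Fin (J + 1)) → Fin (M j + 2) → Bool × (Fin K → Bool) → ℝ)
    (hθ : ∀ j r α, 0 < θ j r α) (hθs : ∀ j α, ∑ r, θ j r α = 1)
    -- only item 1 depends on the first attribute
    (hone : ∀ j : Fin (J + 1), j ≠ 0 → ∀ (r : Fin (M j + 2)) (α' : Fin K → Bool),
      θ j r (true, α') = θ j r (false, α')) :
    ∃ ε > (0 : ℝ), ∀ E : ℝ, |E - 1| < ε → E ≠ 1 →
      ∃ (ηb : Bool × (Fin K → Bool) → ℝ)
        (θb : (j : Fin (J + 1)) → Fin (M j + 2) → Bool × (Fin K → Bool) → ℝ),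
        -- the explicit construction of the alternative parameters
        (ηb = fun α => if α.1 then E * η α else η α + (1 - E) * η (true, α.2)) ∧
        (θb = fun j r α =>
          if j = 0 then
            (if α.1 then (1 / E) * θ j r α + (1 - 1 / E) * θ j r (false, α.2)
             else θ j r α)
          else θ j r α) ∧
        -- validity of the alternative parameters
        (∀ α, 0 < ηb α) ∧ (∑ α, ηb α = 1) ∧
        (∀ j r α, 0 < θb j r α) ∧ (∀ j α, ∑ r, θb j r α = 1) ∧
        -- they differ from the original parameters
        (ηb ≠ η ∨ θb ≠ θ) ∧
        -- yet produce the same response-pattern distribution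
        (∀ r : (j : Fin (J + 1)) → Fin (M j + 2),
          ∑ α, ηb α * ∏ j, θb j (r j) α = ∑ α, η α * ∏ j, θ j (r j) α) := by
  classical
  have hη1 : ∀ α, η α ≤ 1 := by
    intro α
    calc η α ≤ ∑ β, η β :=
          Finset.single_le_sum (fun b _ => (hη b).le) (Finset.mem_univ α)
      _ = 1 := hηs
  have hθ1 : ∀ j r α, θ j r α ≤ 1 := by
    intro j r α
    calc θ j r α ≤ ∑ s, θ j s α :=
          Finset.single_le_sum (fun s _ => (hθ j s α).le) (Finset.mem_univ r)
      _ = 1 := hθs j α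
  set c1 : ℝ := Finset.univ.inf' Finset.univ_nonempty
      (fun α' : Fin K → Bool => η (false, α')) with hc1def
  set c2 : ℝ := Finset.univ.inf' Finset.univ_nonempty
      (fun p : Fin (M 0 + 2) × (Fin K → Bool) => θ 0 p.1 (true, p.2)) with hc2def
  have hc1 : 0 < c1 := by
    rw [hc1def, Finset.lt_inf'_iff]; intro b _; exact hη _
  have hc2 : 0 < c2 := by
    rw [hc2def, Finset.lt_inf'_iff]; intro b _; exact hθ _ _ _
  have hc1le : ∀ α', c1 ≤ η (false, α') := fun α' =>
    Finset.inf'_le _ (Finset.mem_univ _)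
  have hc2le : ∀ (r : Fin (M 0 + 2)) (α' : Fin K → Bool), c2 ≤ θ 0 r (true, α') := fun r α' =>
    Finset.inf'_le (fun p : Fin (M 0 + 2) × (Fin K → Bool) => θ 0 p.1 (true, p.2))
      (Finset.mem_univ (r, α'))
  refine ⟨min (1/2) (min c1 c2), by positivity, ?_⟩
  intro E hE hE1
  have hE2 : |E - 1| < 1/2 := lt_of_lt_of_le hE (min_le_left _ _)
  have hEc1 : |E - 1| < c1 := lt_of_lt_of_le hE ((min_le_right _ _).trans (min_le_left _ _))
  have hEc2 : |E - 1| < c2 := lt_of_lt_of_le hE ((min_le_right _ _).trans (min_le_right _ _))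
  obtain ⟨hEa, hEb⟩ := abs_lt.mp hE2
  have hEpos : 0 < E := by linarith
  have hE0 : E ≠ 0 := ne_of_gt hEpos
  refine ⟨_, _, rfl, rfl, ?_, ?_, ?_, ?_, ?_, ?_⟩
  · -- positivity of ηb
    rintro ⟨b, α'⟩
    cases b
    · simp only [if_neg Bool.false_ne_true]
      show (0:ℝ) < η (false, α') + (1 - E) * η (true, α')
      obtain ⟨h1, h2⟩ := abs_lt.mp hEc1
      rcases le_or_gt E 1 with hle | hlt
      · have hb : 0 ≤ (1 - E) * η (true, α') :=
          mul_nonneg (by linarith) (hη (true, α')).le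
        linarith [hη (false, α')]
      · have hb : (1 - E) * 1 ≤ (1 - E) * η (true, α') :=
          mul_le_mul_of_nonpos_left (hη1 (true, α')) (by linarith)
        linarith [hc1le α']
    · simpa using mul_pos hEpos (hη (true, α'))
  · -- ηb sums to 1
    rw [Fintype.sum_prod_type] at hηs ⊢
    rw [Fintype.sum_bool] at hηs ⊢
    simp only [if_neg Bool.false_ne_true, if_pos rfl, if_true]
    rw [← Finset.mul_sum, Finset.sum_add_distrib, ← Finset.mul_sum]
    linear_combination hηs
  · -- positivity of θb
    rintro j r ⟨b, α'⟩
    by_cases hj : j = 0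
    · subst hj
      cases b
      · simpa using hθ 0 r (false, α')
      · simp only [if_pos rfl, if_true]
        obtain ⟨h1, h2⟩ := abs_lt.mp hEc2
        have key : 0 < θ 0 r (true, α') + (E - 1) * θ 0 r (false, α') := by
          nlinarith [hc2le r α', hθ1 0 r (false, α'), (hθ 0 r (false, α')).le]
        have heq : (1 / E) * θ 0 r (true, α') + (1 - 1 / E) * θ 0 r (false, α')
            = (θ 0 r (true, α') + (E - 1) * θ 0 r (false, α')) / E := by
          field_simp
        rw [heq]
        exact div_pos key hEpos
    · simp only [if_neg hj]
      exact hθ j r (b, α')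
  · -- θb rows sum to 1
    rintro j ⟨b, α'⟩
    by_cases hj : j = 0
    · subst hj
      cases b
      · simpa using hθs 0 (false, α')
      · simp only [if_pos rfl, if_true]
        rw [Finset.sum_add_distrib, ← Finset.mul_sum, ← Finset.mul_sum]
        rw [hθs 0 (true, α'), hθs 0 (false, α')]
        field_simp
        ring
    · simp only [if_neg hj]
      exact hθs j (b, α')
  · -- the parameters differ
    left
    intro h
    have h2 := congrFun h (true, fun _ => false)
    simp only [if_pos rfl, if_true] at h2
    have h3 : E * η (true, fun _ => false) = 1 * η (true, fun _ => false) := by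
      rw [one_mul]; exact h2
    exact hE1 (mul_right_cancel₀ (ne_of_gt (hη (true, fun _ => false))) h3)
  · -- same response-pattern distribution
    intro r
    rw [Fintype.sum_prod_type, Fintype.sum_prod_type, Fintype.sum_bool, Fintype.sum_bool,
      ← Finset.sum_add_distrib, ← Finset.sum_add_distrib]
    apply Finset.sum_congr rfl
    intro α' _
    have hP : ∀ b : Bool, ∏ i : Fin J, θ i.succ (r i.succ) (b, α')
        = ∏ i : Fin J, θ i.succ (r i.succ) (false, α') := by
      intro b
      cases b
      · rfl
      · exact Finset.prod_congr rfl fun i _ => hone i.succ (Fin.succ_ne_zero i) _ _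
    simp only [Fin.prod_univ_succ, if_pos rfl, if_true, if_neg (Fin.succ_ne_zero _),
      if_neg Bool.false_ne_true]
    rw [hP true]
    set P := ∏ i : Fin J, θ i.succ (r i.succ) (false, α') with hPdef
    field_simp
    ring
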